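/- Let S ⊆ ℤⁿ be a subsemigroup containing 0 and let γ : ℝ≥0 → Hom(S, [0,1]) be a one-parameter semigroup of semigroup homomorphisms S → ([0,1], ·) (i.e., γ(t+s)(x) = γ(t)(x)·γ(s)(x), γ continuous in t pointwise) with γ(0) the constant function 1. Then there exists a linear functional λ : ℝⁿ → ℝ with λ(x) ≥ 0 for all x ∈ S, such that γ(t)(x) = e^{−tλ(x)} for all t ≥ 0 and x ∈ S. -/

import Mathlib

/-- A nonnegative multiplicative semigroup function on `[0,∞)` continuous at `0` with value `1`
at `0` is everywhere positive. -/
private lemma aux_pos (f : ℝ → ℝ) (hv : ∀ t ≥ (0:ℝ), 0 ≤ f t)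
    (hm : ∀ t ≥ (0:ℝ), ∀ s ≥ (0:ℝ), f (t + s) = f t * f s)
    (hc : ContinuousWithinAt f (Set.Ici 0) 0) (h0 : f 0 = 1) :
    ∀ t ≥ (0:ℝ), 0 < f t := by
  have h1 : Filter.Tendsto f (nhdsWithin 0 (Set.Ici 0)) (nhds 1) := by
    simpa [ContinuousWithinAt, h0] using hc
  have h2 : ∀ᶠ s in nhdsWithin 0 (Set.Ici 0), 0 < f s :=
    h1.eventually (eventually_gt_nhds one_pos)
  obtain ⟨ε, hε, hball⟩ := Metric.mem_nhdsWithin_iff.mp h2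
  simp only [Set.subset_def, Set.mem_inter_iff, Metric.mem_ball, Set.mem_setOf_eq] at hball
  have hdbl : ∀ u ≥ (0:ℝ), f u = f (u / 2) ^ 2 := by
    intro u hu
    have h := hm (u/2) (by linarith) (u/2) (by linarith)
    rw [show u/2 + u/2 = u by ring] at h
    rw [h, sq]
  have hiter : ∀ k : ℕ, ∀ u ≥ (0:ℝ), f u = f (u / 2 ^ k) ^ (2 ^ k) := by
    intro k
    induction k with
    | zero => intro u hu; simp
    | succ k ih =>
      intro u hu
      have h1 := ih u hu
      have h2 := hdbl (u / 2 ^ k) (by positivity)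
      rw [h1, h2, ← pow_mul, show u / 2 ^ k / 2 = u / 2 ^ (k+1) by rw [pow_succ]; ring,
        show 2 * 2 ^ k = 2 ^ (k+1) by rw [pow_succ]; ring]
  intro t ht
  obtain ⟨k, hk⟩ : ∃ k : ℕ, t / ε < 2 ^ k := pow_unbounded_of_one_lt _ one_lt_two
  have htk : t / 2 ^ k < ε := by
    rw [div_lt_iff₀ (by positivity)]
    rw [div_lt_iff₀ hε] at hk
    linarith [hk]
  have htk0 : (0:ℝ) ≤ t / 2 ^ k := by positivity
  have hfpos : 0 < f (t / 2 ^ k) := by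
    refine hball _ ⟨?_, htk0⟩
    rw [Real.dist_eq, sub_zero, abs_of_nonneg htk0]
    exact htk
  rw [hiter k t ht]
  positivity

/-- Continuous solutions of Cauchy's equation on the half line are linear. -/
private lemma aux_cauchy (f : ℝ → ℝ)
    (hadd : ∀ a ≥ (0:ℝ), ∀ b ≥ (0:ℝ), f (a + b) = f a + f b)
    (hcont : ContinuousOn f (Set.Ici 0)) :
    ∀ t ≥ (0:ℝ), f t = t * f 1 := by
  have hf0 : f 0 = 0 := by
    have := hadd 0 le_rfl 0 le_rfl
    simpa using this
  have hadd3 : ∀ u ≥ (0:ℝ), ∀ v ≥ (0:ℝ), ∀ w ≥ (0:ℝ), f (u + v + w) = f u + f v + f w := by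
    intro u hu v hv w hw
    rw [hadd (u+v) (by linarith) w hw, hadd u hu v hv]
  -- extend to an additive map on ℝ
  set F : ℝ → ℝ := fun t => f (max t 0) - f (max (-t) 0) with hF
  have hFadd : ∀ a b : ℝ, F (a + b) = F a + F b := by
    intro a b
    have key : max (a+b) 0 + max (-a) 0 + max (-b) 0 = max (-(a+b)) 0 + max a 0 + max b 0 := by
      simp only [max_def]
      split_ifs <;> linarith
    have h1 := hadd3 (max (a+b) 0) (le_max_right _ _) (max (-a) 0) (le_max_right _ _)
      (max (-b) 0) (le_max_right _ _)
    have h2 := hadd3 (max (-(a+b)) 0) (le_max_right _ _) (max a 0) (le_max_right _ _)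
      (max b 0) (le_max_right _ _)
    rw [key, h2] at h1
    simp only [hF]
    linarith
  have hFcont : Continuous F := by
    have c1 : Continuous fun t : ℝ => f (max t 0) :=
      hcont.comp_continuous (continuous_id.max continuous_const) fun t => Set.mem_Ici.mpr (le_max_right _ _)
    have c2 : Continuous fun t : ℝ => f (max (-t) 0) :=
      hcont.comp_continuous (continuous_neg.max continuous_const) fun t => Set.mem_Ici.mpr (le_max_right _ _)
    exact c1.sub c2
  set Fh : ℝ →+ ℝ := AddMonoidHom.mk' F hFadd with hFh
  have hlin : ∀ t : ℝ, F t = t * F 1 := by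
    intro t
    have := (Fh.toRealLinearMap hFcont).map_smul t 1
    have hco := AddMonoidHom.coe_toRealLinearMap Fh hFcont
    calc F t = Fh.toRealLinearMap hFcont (t • (1:ℝ)) := by
          rw [hco]; simp [Fh]
      _ = t • Fh.toRealLinearMap hFcont 1 := by rw [map_smul]
      _ = t * F 1 := by rw [hco]; simp [Fh]
  intro t ht
  have h1 : F t = f t := by simp [hF, max_eq_left ht, max_eq_right (neg_nonpos_of_nonneg ht), hf0]
  have h2 : F 1 = f 1 := by norm_num [hF, hf0]
  rw [← h1, ← h2]; exact hlin t

theorem stmt_8 {n : ℕ} (S : AddSubmonoid (Fin n → ℤ))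
    (γ : ℝ → (Fin n → ℤ) → ℝ)
    (hval : ∀ t ≥ (0 : ℝ), ∀ x ∈ S, γ t x ∈ Set.Icc (0 : ℝ) 1)
    (hhomx : ∀ t ≥ (0 : ℝ), ∀ x ∈ S, ∀ y ∈ S, γ t (x + y) = γ t x * γ t y)
    (hhomt : ∀ t ≥ (0 : ℝ), ∀ s ≥ (0 : ℝ), ∀ x ∈ S, γ (t + s) x = γ t x * γ s x)
    (hcont : ∀ x ∈ S, ContinuousOn (fun t => γ t x) (Set.Ici (0 : ℝ)))
    (hzero : ∀ x ∈ S, γ 0 x = 1) :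
    ∃ l : (Fin n → ℝ) →ₗ[ℝ] ℝ,
      (∀ x ∈ S, 0 ≤ l (fun j => (x j : ℝ))) ∧
      ∀ t ≥ (0 : ℝ), ∀ x ∈ S, γ t x = Real.exp (-(t * l (fun j => (x j : ℝ)))) := by
  -- positivity of γ
  have hpos : ∀ t ≥ (0:ℝ), ∀ x ∈ S, 0 < γ t x := by
    intro t ht x hx
    refine aux_pos (fun t => γ t x) (fun s hs => (hval s hs x hx).1)
      (fun a ha b hb => hhomt a ha b hb x hx) ((hcont x hx) 0 (by simp)) (hzero x hx) t ht
  -- the exponent function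
  set c : (Fin n → ℤ) → ℝ := fun x => -Real.log (γ 1 x) with hc
  have hγexp : ∀ t ≥ (0:ℝ), ∀ x ∈ S, γ t x = Real.exp (-(t * c x)) := by
    intro t ht x hx
    have hadd : ∀ a ≥ (0:ℝ), ∀ b ≥ (0:ℝ),
        (fun t => -Real.log (γ t x)) (a + b)
          = (fun t => -Real.log (γ t x)) a + (fun t => -Real.log (γ t x)) b := by
      intro a ha b hb
      simp only
      rw [hhomt a ha b hb x hx,
        Real.log_mul (hpos a ha x hx).ne' (hpos b hb x hx).ne']
      ring
    have hcon : ContinuousOn (fun t => -Real.log (γ t x)) (Set.Ici 0) :=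
      ((hcont x hx).log (fun s hs => (hpos s hs x hx).ne')).neg
    have key := aux_cauchy _ hadd hcon t ht
    have hlog : Real.log (γ t x) = -(t * -Real.log (γ 1 x)) := by linarith [key]
    simp only [hc]
    rw [← hlog, Real.exp_log (hpos t ht x hx)]
  -- properties of c
  have hc0 : ∀ x ∈ S, 0 ≤ c x := by
    intro x hx
    simp only [hc, neg_nonneg]
    exact Real.log_nonpos (hpos 1 one_pos.le x hx).le (hval 1 one_pos.le x hx).2
  have hcadd : ∀ x ∈ S, ∀ y ∈ S, c (x + y) = c x + c y := by
    intro x hx y hy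
    simp only [hc, hhomx 1 one_pos.le x hx y hy,
      Real.log_mul (hpos 1 one_pos.le x hx).ne' (hpos 1 one_pos.le y hy).ne']
    ring
  have hγ10 : γ 1 0 = 1 := by
    have h := hhomx 1 one_pos.le 0 S.zero_mem 0 S.zero_mem
    simp only [add_zero] at h
    have hp := hpos 1 one_pos.le 0 S.zero_mem
    nlinarith
  have hczero : c 0 = 0 := by simp [hc, hγ10]
  -- the subgroup generated by S
  set G : AddSubgroup (Fin n → ℤ) :=
    { carrier := {z | ∃ a ∈ S, ∃ b ∈ S, z = a - b}
      zero_mem' := ⟨0, S.zero_mem, 0, S.zero_mem, by simp⟩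
      add_mem' := by
        rintro z w ⟨a, ha, b, hb, rfl⟩ ⟨a', ha', b', hb', rfl⟩
        exact ⟨a + a', S.add_mem ha ha', b + b', S.add_mem hb hb', by abel⟩
      neg_mem' := by
        rintro z ⟨a, ha, b, hb, rfl⟩
        exact ⟨b, hb, a, ha, by abel⟩ } with hG
  -- well-definedness of φ
  have hwd : ∀ a ∈ S, ∀ b ∈ S, ∀ a' ∈ S, ∀ b' ∈ S,
      a - b = a' - b' → c a - c b = c a' - c b' := by
    intro a ha b hb a' ha' b' hb' h
    have h' : a + b' = a' + b := sub_eq_sub_iff_add_eq_add.mp h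
    have := hcadd a ha b' hb'
    rw [h', hcadd a' ha' b hb] at this
    linarith
  -- representatives
  have hrep : ∀ z : G, ∃ p : (Fin n → ℤ) × (Fin n → ℤ),
      p.1 ∈ S ∧ p.2 ∈ S ∧ (z : Fin n → ℤ) = p.1 - p.2 := by
    rintro ⟨z, a, ha, b, hb, rfl⟩
    exact ⟨(a, b), ha, hb, rfl⟩
  choose p hp1 hp2 hp3 using hrep
  set φ₀ : G → ℝ := fun z => c (p z).1 - c (p z).2 with hφ₀def
  have hφ₀ : ∀ z : G, ∀ a ∈ S, ∀ b ∈ S, (z : Fin n → ℤ) = a - b → φ₀ z = c a - c b := by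
    intro z a ha b hb h
    exact hwd _ (hp1 z) _ (hp2 z) _ ha _ hb (by rw [← hp3 z, h])
  have hφadd : ∀ z w : G, φ₀ (z + w) = φ₀ z + φ₀ w := by
    intro z w
    have h : ((z + w : G) : Fin n → ℤ) = ((p z).1 + (p w).1) - ((p z).2 + (p w).2) := by
      push_cast [hp3 z, hp3 w]
      abel
    rw [hφ₀ (z + w) _ (S.add_mem (hp1 z) (hp1 w)) _ (S.add_mem (hp2 z) (hp2 w)) h,
      hcadd _ (hp1 z) _ (hp1 w), hcadd _ (hp2 z) _ (hp2 w)]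
    simp only [hφ₀def]
    ring
  set φ : G →+ ℝ := AddMonoidHom.mk' φ₀ hφadd with hφ
  -- extend φ to all of ℤⁿ using divisibility of ℝ
  obtain ⟨ψ, hψ⟩ := (Module.Baer.of_divisible ℝ).extension_property_addMonoidHom
    (G.subtype) (Subtype.val_injective) φ
  have hψval : ∀ x ∈ S, ψ x = c x := by
    intro x hx
    have hxG : x ∈ G := ⟨x, hx, 0, S.zero_mem, by simp⟩
    have h1 : ψ x = φ ⟨x, hxG⟩ := by
      have := DFunLike.congr_fun hψ (⟨x, hxG⟩ : G)
      simpa using this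
    rw [h1]
    have : φ ⟨x, hxG⟩ = c x - c 0 := hφ₀ _ _ hx _ S.zero_mem (by simp)
    rw [this, hczero, sub_zero]
  -- build the linear functional
  set l : (Fin n → ℝ) →ₗ[ℝ] ℝ :=
    { toFun := fun y => ∑ i, y i * ψ (Pi.single i 1)
      map_add' := by
        intro y z
        simp only [Pi.add_apply, add_mul]
        rw [Finset.sum_add_distrib]
      map_smul' := by
        intro r y
        simp only [Pi.smul_apply, smul_eq_mul, RingHom.id_apply, Finset.mul_sum]
        congr 1
        ext i
        ring } with hl
  have hlval : ∀ x : Fin n → ℤ, l (fun j => (x j : ℝ)) = ψ x := by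
    intro x
    have h1 : l (fun j => (x j : ℝ)) = ∑ i, ψ ((x i) • Pi.single i (1:ℤ)) := by
      simp only [hl, LinearMap.coe_mk, AddHom.coe_mk]
      congr 1
      ext i
      rw [map_zsmul, zsmul_eq_mul]
    rw [h1]
    rw [← map_sum]
    congr 1
    have : ∀ i, (x i) • (Pi.single i (1:ℤ) : Fin n → ℤ) = Pi.single i (x i) := by
      intro i
      ext j
      rcases eq_or_ne j i with rfl | hji
      · simp
      · simp [Pi.single_eq_of_ne hji]
    simp_rw [this]
    exact Finset.univ_sum_single x
  refine ⟨l, ?_, ?_⟩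
  · intro x hx
    rw [hlval x, hψval x hx]
    exact hc0 x hx
  · intro t ht x hx
    rw [hlval x, hψval x hx]
    exact hγexp t ht x hx
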